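/- arXiv:2512.12932 — 2 statements merged into one kernel-verified Lean document; each statement's English description precedes it below -/
import Mathlib

section
/- Let d ≥ 1, let θ̃ ∈ EuclideanSpace ℝ (Fin d), and let R, ℓ : EuclideanSpace ℝ (Fin d) → ℝ be C² functions such that the gradient ∇R(θ̃) = 0 and the Hessian H = ∇²R(θ̃) (the derivative of the gradient map of R at θ̃) is an invertible linear map. Then there exist ε₀ > 0 and a map θ : ℝ → EuclideanSpace ℝ (Fin d), differentiable at 0, such that θ(0) = θ̃, for every ε with |ε| < ε₀ the stationarity condition ∇R(θ(ε)) + ε·∇ℓ(θ(ε)) = 0 holds, and the derivative of θ at 0 equals −H⁻¹(∇ℓ(θ̃)). -/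
open scoped RealInnerProductSpace

section Aux

variable {F : Type*} [NormedAddCommGroup F] [InnerProductSpace ℝ F] [CompleteSpace F]

lemma contDiff_gradient_aux {f : F → ℝ} (hf : ContDiff ℝ 2 f) :
    ContDiff ℝ 1 (gradient f) := by
  have h1 : ContDiff ℝ 1 (fderiv ℝ f) := hf.fderiv_right (by norm_num)
  have : gradient f = fun x => (InnerProductSpace.toDual ℝ F).symm (fderiv ℝ f x) := rfl
  rw [this]
  exact (InnerProductSpace.toDual ℝ F).symm.contDiff.comp h1

end Aux

/-- **Newton-step parameter change for the perturbed minimizer.**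
If `∇R(θ̃) = 0` and the Hessian `H = ∇²R(θ̃)` (the derivative of the gradient
map of `R` at `θ̃`) is invertible, then there is a differentiable branch
`θ(ε)` of stationary points of `R + ε • ℓ` through `θ̃` whose derivative at
`ε = 0` is `-H⁻¹ (∇ℓ(θ̃))`. -/
theorem newton_step_parameter_change
    (d : ℕ) (hd : 1 ≤ d)
    (θt : EuclideanSpace ℝ (Fin d))
    (R ℓ : EuclideanSpace ℝ (Fin d) → ℝ)
    (hR : ContDiff ℝ 2 R) (hℓ : ContDiff ℝ 2 ℓ)
    (hgrad : gradient R θt = 0)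
    (hH : IsUnit (fderiv ℝ (gradient R) θt)) :
    ∃ (ε₀ : ℝ) (θ : ℝ → EuclideanSpace ℝ (Fin d)),
      0 < ε₀ ∧
      DifferentiableAt ℝ θ 0 ∧
      θ 0 = θt ∧
      (∀ ε : ℝ, |ε| < ε₀ →
        gradient R (θ ε) + ε • gradient ℓ (θ ε) = 0) ∧
      deriv θ 0 = -(Ring.inverse (fderiv ℝ (gradient R) θt) (gradient ℓ θt)) := by
  classical
  set H : EuclideanSpace ℝ (Fin d) →L[ℝ] EuclideanSpace ℝ (Fin d) :=
    fderiv ℝ (gradient R) θt with hHdef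
  obtain ⟨u, hu⟩ := hH
  set g : EuclideanSpace ℝ (Fin d) := gradient ℓ θt with hgdef
  set Hinv : EuclideanSpace ℝ (Fin d) →L[ℝ] EuclideanSpace ℝ (Fin d) :=
    (↑u⁻¹ : EuclideanSpace ℝ (Fin d) →L[ℝ] EuclideanSpace ℝ (Fin d)) with hHinvdef
  have hHu : (↑u : EuclideanSpace ℝ (Fin d) →L[ℝ] EuclideanSpace ℝ (Fin d)) = H := hu
  have hRinv : Ring.inverse H = Hinv := by rw [← hHu, Ring.inverse_unit]
  have hmul : ∀ x, H (Hinv x) = x := by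
    intro x
    have h : (↑u * ↑u⁻¹ :
        EuclideanSpace ℝ (Fin d) →L[ℝ] EuclideanSpace ℝ (Fin d)) = 1 := u.mul_inv
    calc H (Hinv x) = ((↑u * ↑u⁻¹ :
        EuclideanSpace ℝ (Fin d) →L[ℝ] EuclideanSpace ℝ (Fin d))) x := by rw [← hHu]; rfl
    _ = x := by rw [h]; rfl
  have hmul' : ∀ x, Hinv (H x) = x := by
    intro x
    have h : (↑u⁻¹ * ↑u :
        EuclideanSpace ℝ (Fin d) →L[ℝ] EuclideanSpace ℝ (Fin d)) = 1 := u.inv_mul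
    calc Hinv (H x) = ((↑u⁻¹ * ↑u :
        EuclideanSpace ℝ (Fin d) →L[ℝ] EuclideanSpace ℝ (Fin d))) x := by rw [← hHu]; rfl
    _ = x := by rw [h]; rfl
  -- the map G and its derivative A
  set G : ℝ × EuclideanSpace ℝ (Fin d) → ℝ × EuclideanSpace ℝ (Fin d) :=
    fun p => (p.1, gradient R p.2 + p.1 • gradient ℓ p.2) with hGdef
  set Afwd : ℝ × EuclideanSpace ℝ (Fin d) →L[ℝ] ℝ × EuclideanSpace ℝ (Fin d) :=
    (ContinuousLinearMap.fst ℝ ℝ (EuclideanSpace ℝ (Fin d))).prod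
      (H.comp (ContinuousLinearMap.snd ℝ ℝ (EuclideanSpace ℝ (Fin d))) +
        (ContinuousLinearMap.fst ℝ ℝ (EuclideanSpace ℝ (Fin d))).smulRight g) with hAfwd
  set Ainv : ℝ × EuclideanSpace ℝ (Fin d) →L[ℝ] ℝ × EuclideanSpace ℝ (Fin d) :=
    (ContinuousLinearMap.fst ℝ ℝ (EuclideanSpace ℝ (Fin d))).prod
      (Hinv.comp (ContinuousLinearMap.snd ℝ ℝ (EuclideanSpace ℝ (Fin d))) -
        (ContinuousLinearMap.fst ℝ ℝ (EuclideanSpace ℝ (Fin d))).smulRight (Hinv g))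
    with hAinv
  have hAleft : ∀ p, Ainv (Afwd p) = p := by
    rintro ⟨e, v⟩
    simp only [hAfwd, hAinv, ContinuousLinearMap.prod_apply, ContinuousLinearMap.sub_apply,
      ContinuousLinearMap.add_apply, ContinuousLinearMap.coe_comp', Function.comp_apply,
      ContinuousLinearMap.smulRight_apply, ContinuousLinearMap.coe_fst',
      ContinuousLinearMap.coe_snd', map_add, map_smul]
    refine Prod.ext rfl ?_
    simp only [hmul']
    abel
  have hAright : ∀ p, Afwd (Ainv p) = p := by
    rintro ⟨e, w⟩
    simp only [hAfwd, hAinv, ContinuousLinearMap.prod_apply, ContinuousLinearMap.sub_apply,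
      ContinuousLinearMap.add_apply, ContinuousLinearMap.coe_comp', Function.comp_apply,
      ContinuousLinearMap.smulRight_apply, ContinuousLinearMap.coe_fst',
      ContinuousLinearMap.coe_snd', map_sub, map_smul]
    refine Prod.ext rfl ?_
    simp only [hmul]
    abel
  set A : (ℝ × EuclideanSpace ℝ (Fin d)) ≃L[ℝ] (ℝ × EuclideanSpace ℝ (Fin d)) :=
    ContinuousLinearEquiv.equivOfInverse Afwd Ainv hAleft hAright with hA
  -- strict derivative of G at (0, θt)
  have hgR : ContDiff ℝ 1 (gradient R) := contDiff_gradient_aux hR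
  have hgℓ : ContDiff ℝ 1 (gradient ℓ) := contDiff_gradient_aux hℓ
  have hsR : HasStrictFDerivAt (gradient R) H θt :=
    hgR.contDiffAt.hasStrictFDerivAt one_ne_zero
  have hsℓ : HasStrictFDerivAt (gradient ℓ) (fderiv ℝ (gradient ℓ) θt) θt :=
    hgℓ.contDiffAt.hasStrictFDerivAt one_ne_zero
  have hG : HasStrictFDerivAt G
      (A : ℝ × EuclideanSpace ℝ (Fin d) →L[ℝ] ℝ × EuclideanSpace ℝ (Fin d)) ((0 : ℝ), θt) := by
    have h1 : HasStrictFDerivAt (fun p : ℝ × EuclideanSpace ℝ (Fin d) => p.1)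
        (ContinuousLinearMap.fst ℝ ℝ (EuclideanSpace ℝ (Fin d))) ((0 : ℝ), θt) :=
      hasStrictFDerivAt_fst
    have h2 : HasStrictFDerivAt (fun p : ℝ × EuclideanSpace ℝ (Fin d) => gradient R p.2)
        (H.comp (ContinuousLinearMap.snd ℝ ℝ (EuclideanSpace ℝ (Fin d)))) ((0 : ℝ), θt) :=
      hsR.comp _ hasStrictFDerivAt_snd
    have h3 : HasStrictFDerivAt (fun p : ℝ × EuclideanSpace ℝ (Fin d) => gradient ℓ p.2)
        ((fderiv ℝ (gradient ℓ) θt).comp (ContinuousLinearMap.snd ℝ ℝ (EuclideanSpace ℝ (Fin d))))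
        ((0 : ℝ), θt) := hsℓ.comp _ hasStrictFDerivAt_snd
    have h4 : HasStrictFDerivAt (fun p : ℝ × EuclideanSpace ℝ (Fin d) => p.1 • gradient ℓ p.2)
        ((0 : ℝ) • ((fderiv ℝ (gradient ℓ) θt).comp
            (ContinuousLinearMap.snd ℝ ℝ (EuclideanSpace ℝ (Fin d)))) +
          (ContinuousLinearMap.fst ℝ ℝ (EuclideanSpace ℝ (Fin d))).smulRight g)
        ((0 : ℝ), θt) := h1.smul h3
    replace h4 := HasStrictFDerivAt.congr_fderiv h4
      (show _ = (ContinuousLinearMap.fst ℝ ℝ (EuclideanSpace ℝ (Fin d))).smulRight g by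
        ext x <;> simp)
    exact HasStrictFDerivAt.prodMk h1 (HasStrictFDerivAt.add h2 h4)
  -- the local inverse
  set Ginv := hG.localInverse G _ _ with hGinvdef
  have hG0 : G ((0 : ℝ), θt) = ((0 : ℝ), (0 : EuclideanSpace ℝ (Fin d))) := by
    simp [hGdef, hgrad]
  set θ : ℝ → EuclideanSpace ℝ (Fin d) := fun ε => (Ginv (ε, 0)).2 with hθdef
  have hright : ∀ᶠ y in nhds (((0 : ℝ), (0 : EuclideanSpace ℝ (Fin d)))),
      G (Ginv y) = y := by
    have := hG.eventually_right_inverse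
    rwa [hG0] at this
  obtain ⟨s, hs_sub, hs_open, hs_mem⟩ := mem_nhds_iff.mp hright
  obtain ⟨ε₀, hε₀pos, hball⟩ := Metric.isOpen_iff.mp hs_open _ hs_mem
  -- the derivative of θ at 0
  have h1 : HasStrictFDerivAt Ginv
      ((A.symm : ℝ × EuclideanSpace ℝ (Fin d) →L[ℝ] ℝ × EuclideanSpace ℝ (Fin d)))
      ((0 : ℝ), (0 : EuclideanSpace ℝ (Fin d))) := by
    have := hG.to_localInverse
    rwa [hG0] at this
  have h2 : HasFDerivAt (fun ε : ℝ => ((ε, 0) : ℝ × EuclideanSpace ℝ (Fin d)))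
      (ContinuousLinearMap.inl ℝ ℝ (EuclideanSpace ℝ (Fin d))) 0 :=
    (ContinuousLinearMap.inl ℝ ℝ (EuclideanSpace ℝ (Fin d))).hasFDerivAt
  have h3 : HasFDerivAt (Ginv ∘ fun ε : ℝ => ((ε, 0) : ℝ × EuclideanSpace ℝ (Fin d)))
      ((A.symm : ℝ × EuclideanSpace ℝ (Fin d) →L[ℝ] ℝ × EuclideanSpace ℝ (Fin d)).comp
        (ContinuousLinearMap.inl ℝ ℝ (EuclideanSpace ℝ (Fin d)))) 0 :=
    HasFDerivAt.comp (x := (0:ℝ)) (g := Ginv) h1.hasFDerivAt h2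
  have hsnd : HasFDerivAt (Prod.snd : ℝ × EuclideanSpace ℝ (Fin d) → EuclideanSpace ℝ (Fin d))
      (ContinuousLinearMap.snd ℝ ℝ (EuclideanSpace ℝ (Fin d)))
      (Ginv ((0 : ℝ), (0 : EuclideanSpace ℝ (Fin d)))) :=
    (ContinuousLinearMap.snd ℝ ℝ (EuclideanSpace ℝ (Fin d))).hasFDerivAt
  have h4 : HasFDerivAt θ
      ((ContinuousLinearMap.snd ℝ ℝ (EuclideanSpace ℝ (Fin d))).comp
        ((A.symm : ℝ × EuclideanSpace ℝ (Fin d) →L[ℝ] ℝ × EuclideanSpace ℝ (Fin d)).comp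
          (ContinuousLinearMap.inl ℝ ℝ (EuclideanSpace ℝ (Fin d))))) 0 :=
    HasFDerivAt.comp (x := (0:ℝ)) hsnd h3
  have h5 : HasDerivAt θ
      (((ContinuousLinearMap.snd ℝ ℝ (EuclideanSpace ℝ (Fin d))).comp
        ((A.symm : ℝ × EuclideanSpace ℝ (Fin d) →L[ℝ] ℝ × EuclideanSpace ℝ (Fin d)).comp
          (ContinuousLinearMap.inl ℝ ℝ (EuclideanSpace ℝ (Fin d))))) 1) 0 :=
    h4.hasDerivAt
  refine ⟨ε₀, θ, hε₀pos, h5.differentiableAt, ?_, ?_, ?_⟩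
  · -- θ 0 = θt
    have h := hG.localInverse_apply_image
    rw [hG0] at h
    simpa [hθdef] using congrArg Prod.snd h
  · -- stationarity
    intro ε hε
    have hmem : ((ε, 0) : ℝ × EuclideanSpace ℝ (Fin d)) ∈ s := by
      apply hball
      rw [Metric.mem_ball, Prod.dist_eq]
      simp only [dist_zero_right, Real.norm_eq_abs]
      exact max_lt hε (by simpa using hε₀pos)
    have hGG : G (Ginv (ε, 0)) = (ε, 0) := hs_sub hmem
    have he1 : (Ginv (ε, 0)).1 = ε := congrArg Prod.fst hGG
    have he2 : gradient R (Ginv (ε, 0)).2 + (Ginv (ε, 0)).1 • gradient ℓ (Ginv (ε, 0)).2 = 0 :=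
      congrArg Prod.snd hGG
    rw [he1] at he2
    exact he2
  · -- derivative value
    rw [h5.deriv]
    have hsymm : (A.symm : ℝ × EuclideanSpace ℝ (Fin d) →L[ℝ] ℝ × EuclideanSpace ℝ (Fin d))
        = Ainv := rfl
    rw [hRinv]
    simp [hsymm, hAinv]
end

section
/- Let d ≥ 1, let θ̃ ∈ EuclideanSpace ℝ (Fin d), let R : EuclideanSpace ℝ (Fin d) → ℝ be C² with ∇R(θ̃) = 0 and Hessian H = ∇²R(θ̃) positive definite, and let g ∈ EuclideanSpace ℝ (Fin d). Let θ : ℝ → EuclideanSpace ℝ (Fin d) be differentiable at 0 with θ(0) = θ̃ and θ'(0) = −H⁻¹ g. Then the limit as ε → 0 of (R(θ(ε)) − R(θ̃)) / ε² exists and equals ½ ⟨g, H⁻¹ g⟩. In particular, the second-order coefficient of the subset risk change along the perturbed-minimizer path is half the subset-based self-influence I := ⟨g, H⁻¹ g⟩. -/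
open scoped RealInnerProductSpace Topology


open Asymptotics Filter

lemma taylor2_littleO {E : Type*} [NormedAddCommGroup E] [NormedSpace ℝ E]
    (f : E → ℝ) (a : E) (f'' : E →L[ℝ] E →L[ℝ] ℝ)
    (hdiff : Differentiable ℝ f) (hsnd : HasFDerivAt (fderiv ℝ f) f'' a)
    (hsymm : ∀ v w, f'' v w = f'' w v)
    (hf'a : fderiv ℝ f a = 0) :
    (fun x => f x - f a - (1/2) * f'' (x - a) (x - a)) =o[𝓝 a] fun x => ‖x - a‖ ^ 2 := by
  set G : E → ℝ := fun x => f x - f a - (1/2) * f'' (x - a) (x - a) with hG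
  set DG : E → (E →L[ℝ] ℝ) := fun x => fderiv ℝ f x - f'' (x - a) with hDG
  have hbil : IsBoundedBilinearMap ℝ (fun p : E × E => f'' p.1 p.2) := f''.isBoundedBilinearMap
  -- derivative of the quadratic part
  have hqd : ∀ x : E, HasFDerivAt (fun y => (1/2) * f'' (y - a) (y - a)) (f'' (x - a)) x := by
    intro x
    have hc : HasFDerivAt (fun y : E => (y - a, y - a))
        ((ContinuousLinearMap.id ℝ E).prod (ContinuousLinearMap.id ℝ E)) x :=
      ((hasFDerivAt_id x).sub_const a).prodMk ((hasFDerivAt_id x).sub_const a)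
    have hb := (hbil.hasFDerivAt (x - a, x - a)).comp x hc
    have hb2 := hb.const_mul (1/2 : ℝ)
    refine hb2.congr_fderiv ?_
    ext w
    simp only [ContinuousLinearMap.coe_comp', Function.comp_apply,
      ContinuousLinearMap.smul_apply, ContinuousLinearMap.prod_apply,
      ContinuousLinearMap.coe_id', id_eq, IsBoundedBilinearMap.deriv_apply,
      smul_eq_mul]
    rw [hsymm w (x - a)]
    ring
  have hGd : ∀ x : E, HasFDerivAt G (DG x) x := fun x =>
    ((hdiff x).hasFDerivAt.sub_const (f a)).sub (hqd x)
  have hDGa : DG a = 0 := by simp [hDG, hf'a]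
  have hDGd : HasFDerivAt DG (0 : E →L[ℝ] (E →L[ℝ] ℝ)) a := by
    have hid : HasFDerivAt (fun x : E => x - a) (ContinuousLinearMap.id ℝ E) a :=
      (hasFDerivAt_id a).sub_const a
    have h1' : HasFDerivAt (fun x : E => f'' (x - a))
        (f''.comp (ContinuousLinearMap.id ℝ E)) a :=
      (f''.hasFDerivAt).comp a hid
    have h1 : HasFDerivAt (fun x : E => f'' (x - a)) f'' a := by
      simpa using h1'
    have h2 := hsnd.sub h1
    have he : DG = fun x => fderiv ℝ f x - f'' (x - a) := hDG
    rw [he]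
    exact h2.congr_fderiv (sub_self _)
  have hDGo : (fun x => DG x) =o[𝓝 a] fun x => x - a := by
    have := hDGd.isLittleO
    simpa [hDGa] using this
  rw [isLittleO_iff]
  intro c hc
  have h1 : ∀ᶠ x in 𝓝 a, ‖DG x‖ ≤ c * ‖x - a‖ := by
    have := isLittleO_iff.1 hDGo hc
    simpa using this
  rcases Metric.eventually_nhds_iff.1 h1 with ⟨δ, hδ, hball⟩
  filter_upwards [Metric.ball_mem_nhds a hδ] with x hx
  have hseg : segment ℝ a x ⊆ Metric.ball a δ :=
    (convex_ball a δ).segment_subset (Metric.mem_ball_self hδ) hx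
  have hbound : ∀ y ∈ segment ℝ a x, ‖fderiv ℝ G y‖ ≤ c * ‖x - a‖ := by
    intro y hy
    have hyb : y ∈ Metric.ball a δ := hseg hy
    have h2 : ‖DG y‖ ≤ c * ‖y - a‖ := hball (by simpa [Metric.mem_ball] using hyb)
    have h3 : ‖y - a‖ ≤ ‖x - a‖ := by
      have hy' := hy
      rw [segment_eq_image'] at hy'
      obtain ⟨t, ⟨ht0, ht1⟩, rfl⟩ := hy'
      simp only [add_sub_cancel_left, norm_smul, Real.norm_eq_abs, abs_of_nonneg ht0]
      exact mul_le_of_le_one_left (norm_nonneg _) ht1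
    rw [(hGd y).fderiv]
    calc ‖DG y‖ ≤ c * ‖y - a‖ := h2
      _ ≤ c * ‖x - a‖ := by
        exact mul_le_mul_of_nonneg_left h3 (le_of_lt hc)
  have hmv := Convex.norm_image_sub_le_of_norm_fderiv_le (fun y _ => (hGd y).differentiableAt)
      hbound (convex_segment a x) (left_mem_segment ℝ a x) (right_mem_segment ℝ a x)
  have hGa : G a = 0 := by simp [hG]
  rw [hGa, sub_zero] at hmv
  calc ‖G x‖ ≤ c * ‖x - a‖ * ‖x - a‖ := hmv
    _ = c * ‖x - a‖ ^ 2 := by ring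
    _ ≤ c * ‖‖x - a‖ ^ 2‖ := by
        rw [Real.norm_eq_abs, abs_of_nonneg (by positivity)]

set_option maxHeartbeats 1000000 in
/-- **Self-influence as the leading coefficient of the risk change.**
If `∇R(θ̃) = 0`, the Hessian `H = ∇²R(θ̃)` is positive definite, and `θ(ε)`
is differentiable at `0` with `θ(0) = θ̃` and `θ'(0) = -H⁻¹ g`, then
`(R(θ(ε)) - R(θ̃)) / ε² → ½ ⟪g, H⁻¹ g⟫` as `ε → 0`; i.e. the second-order
coefficient of the risk change is half the self-influence `⟪g, H⁻¹ g⟫`. -/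
theorem risk_change_second_order_is_half_self_influence
    (d : ℕ) (hd : 1 ≤ d)
    (θt : EuclideanSpace ℝ (Fin d))
    (R : EuclideanSpace ℝ (Fin d) → ℝ)
    (hR : ContDiff ℝ 2 R)
    (hgrad : gradient R θt = 0)
    (hposdef : ∀ v : EuclideanSpace ℝ (Fin d), v ≠ 0 →
      0 < ⟪v, (fderiv ℝ (gradient R) θt) v⟫)
    (g : EuclideanSpace ℝ (Fin d))
    (θ : ℝ → EuclideanSpace ℝ (Fin d))
    (hθdiff : DifferentiableAt ℝ θ 0)
    (hθ0 : θ 0 = θt)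
    (hθ' : deriv θ 0 = -(Ring.inverse (fderiv ℝ (gradient R) θt) g)) :
    Filter.Tendsto (fun ε : ℝ => (R (θ ε) - R θt) / ε ^ 2)
      (𝓝[≠] 0)
      (𝓝 ((1 / 2) * ⟪g, Ring.inverse (fderiv ℝ (gradient R) θt) g⟫)) := by
  set H : (EuclideanSpace ℝ (Fin d)) →L[ℝ] (EuclideanSpace ℝ (Fin d)) := fderiv ℝ (gradient R) θt with hH
  -- basic differentiability facts
  have hdiff : Differentiable ℝ R := hR.differentiable two_ne_zero
  have hfd1 : ContDiff ℝ 1 (fderiv ℝ R) := by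
    have : ContDiff ℝ (1 + 1) R := by norm_num [hR]
    exact this.fderiv_right (le_refl _)
  have hfdd : DifferentiableAt ℝ (fderiv ℝ R) θt :=
    (hfd1.differentiable one_ne_zero) θt
  set f'' : (EuclideanSpace ℝ (Fin d)) →L[ℝ] (EuclideanSpace ℝ (Fin d)) →L[ℝ] ℝ := fderiv ℝ (fderiv ℝ R) θt with hf''
  have hsnd : HasFDerivAt (fderiv ℝ R) f'' θt := hfdd.hasFDerivAt
  have hsymm : ∀ v w, f'' v w = f'' w v :=
    second_derivative_symmetric (fun y => (hdiff y).hasFDerivAt) hsnd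
  -- relate H and f''
  set e : StrongDual ℝ (EuclideanSpace ℝ (Fin d)) ≃L[ℝ] (EuclideanSpace ℝ (Fin d)) :=
    (InnerProductSpace.toDual ℝ (EuclideanSpace ℝ (Fin d))).symm.toContinuousLinearEquiv with he
  have hgradeq : gradient R = fun x => e (fderiv ℝ R x) := rfl
  have hHeq : H = (e : StrongDual ℝ (EuclideanSpace ℝ (Fin d)) →L[ℝ] (EuclideanSpace ℝ (Fin d))).comp f'' := by
    have h1 : HasFDerivAt (gradient R)
        (((e : StrongDual ℝ (EuclideanSpace ℝ (Fin d)) →L[ℝ] (EuclideanSpace ℝ (Fin d)))).comp f'') θt := by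
      rw [hgradeq]
      exact ((e : StrongDual ℝ (EuclideanSpace ℝ (Fin d)) →L[ℝ] (EuclideanSpace ℝ (Fin d))).hasFDerivAt).comp θt hsnd
    rw [hH]
    exact h1.fderiv
  have hHinner : ∀ v w : EuclideanSpace ℝ (Fin d), ⟪H v, w⟫ = f'' v w := by
    intro v w
    rw [hHeq]
    exact InnerProductSpace.toDual_symm_apply
  -- fderiv R θt = 0
  have hf'0 : fderiv ℝ R θt = 0 := by
    have : e (fderiv ℝ R θt) = 0 := hgrad
    simpa using congrArg (InnerProductSpace.toDual ℝ (EuclideanSpace ℝ (Fin d))) this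
  -- H is a unit
  have hinj : Function.Injective H := by
    intro x y hxy
    by_contra hne
    have hsub : x - y ≠ 0 := sub_ne_zero.2 hne
    have := hposdef (x - y) hsub
    rw [show H (x - y) = 0 by rw [map_sub, hxy, sub_self]] at this
    simp at this
  have hbij : Function.Bijective H :=
    ⟨hinj, (LinearMap.injective_iff_surjective (f := (H : (EuclideanSpace ℝ (Fin d)) →ₗ[ℝ] (EuclideanSpace ℝ (Fin d))))).1 hinj⟩
  have hunit : IsUnit H := by
    refine ⟨((LinearEquiv.ofBijective (H : (EuclideanSpace ℝ (Fin d)) →ₗ[ℝ] (EuclideanSpace ℝ (Fin d))) hbij).toContinuousLinearEquiv).toUnit, ?_⟩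
    ext x
    rfl
  have hHinv : ∀ u : (EuclideanSpace ℝ (Fin d)), H (Ring.inverse H u) = u := by
    intro u
    have := Ring.mul_inverse_cancel H hunit
    calc H (Ring.inverse H u) = (H * Ring.inverse H) u := rfl
      _ = u := by rw [this]; rfl
  set v : (EuclideanSpace ℝ (Fin d)) := -(Ring.inverse H g) with hv
  have hHv : H v = -g := by rw [hv, map_neg, hHinv]
  -- the limit of the quadratic part
  have hval : (1/2 : ℝ) * f'' v v = (1/2) * ⟪g, Ring.inverse H g⟫ := by
    rw [← hHinner v v, hHv, hv]
    rw [inner_neg_neg, real_inner_comm]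
  -- slope tendsto
  have hderiv : HasDerivAt θ v 0 := by
    have h := hθdiff.hasDerivAt
    rwa [hθ'] at h
  have hu : Tendsto (fun ε : ℝ => ε⁻¹ • (θ ε - θt)) (𝓝[≠] 0) (𝓝 v) := by
    have hs := hasDerivAt_iff_tendsto_slope.1 hderiv
    have : slope θ 0 = fun ε => ε⁻¹ • (θ ε - θt) := by
      funext ε
      simp [slope, hθ0]
    rwa [this] at hs
  -- quadratic part tendsto
  have hcont : Continuous fun p : (EuclideanSpace ℝ (Fin d)) × (EuclideanSpace ℝ (Fin d)) => f'' p.1 p.2 :=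
    f''.isBoundedBilinearMap.continuous
  have h2 : Tendsto (fun ε : ℝ => (1/2 : ℝ) * f'' (ε⁻¹ • (θ ε - θt)) (ε⁻¹ • (θ ε - θt)))
      (𝓝[≠] 0) (𝓝 ((1/2) * f'' v v)) := by
    have := (hcont.tendsto (v, v)).comp (hu.prodMk_nhds hu)
    exact this.const_mul (1/2 : ℝ)
  -- remainder term
  set G : (EuclideanSpace ℝ (Fin d)) → ℝ := fun x => R x - R θt - (1/2) * f'' (x - θt) (x - θt) with hG
  have hGo : G =o[𝓝 θt] fun x => ‖x - θt‖ ^ 2 :=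
    taylor2_littleO R θt f'' hdiff hsnd hsymm hf'0
  have hθtend : Tendsto θ (𝓝[≠] 0) (𝓝 θt) := by
    have := hθdiff.continuousAt.tendsto
    rw [hθ0] at this
    exact this.mono_left nhdsWithin_le_nhds
  have hbigO : (fun ε : ℝ => ‖θ ε - θt‖ ^ 2) =O[𝓝[≠] 0] fun ε => ε ^ 2 := by
    have h := hθdiff.isBigO_sub
    rw [hθ0] at h
    have h2 := (h.norm_norm.pow 2)
    have h3 : (fun ε : ℝ => ‖θ ε - θt‖ ^ 2) =O[𝓝 0] fun ε => ‖ε - 0‖ ^ 2 := by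
      simpa using h2
    have h4 : (fun ε : ℝ => ‖ε - 0‖ ^ 2) =O[𝓝 (0:ℝ)] fun ε => ε ^ 2 := by
      apply IsBigO.of_bound 1
      filter_upwards with ε
      simp [abs_of_nonneg, sq_abs]
    exact (h3.trans h4).mono nhdsWithin_le_nhds
  have h3 : Tendsto (fun ε : ℝ => G (θ ε) / ε ^ 2) (𝓝[≠] 0) (𝓝 0) := by
    have := (hGo.comp_tendsto hθtend).trans_isBigO hbigO
    exact this.tendsto_div_nhds_zero
  -- combine
  have hsum := h2.add h3
  rw [add_zero, hval] at hsum
  apply hsum.congr'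
  filter_upwards [self_mem_nhdsWithin] with ε (hε : ε ≠ 0)
  have hsmul : θ ε - θt = ε • (ε⁻¹ • (θ ε - θt)) := by
    rw [smul_smul, mul_inv_cancel₀ hε, one_smul]
  have hq : f'' (θ ε - θt) (θ ε - θt)
      = ε ^ 2 * f'' (ε⁻¹ • (θ ε - θt)) (ε⁻¹ • (θ ε - θt)) := by
    conv_lhs => rw [hsmul]
    simp only [map_smul, ContinuousLinearMap.smul_apply, smul_eq_mul]
    ring
  have hGe : G (θ ε) = R (θ ε) - R θt - (1/2) * f'' (θ ε - θt) (θ ε - θt) := rfl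
  rw [hGe, hq]
  field_simp
  ring
end
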